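/- Let T : E → F be a continuous linear surjection between Banach spaces. Then there exists a continuous (not necessarily linear) map s : F → E with T(s(y)) = y for all y ∈ F. Moreover s can be chosen positively homogeneous: s(λy) = λ s(y) for all λ ≥ 0. -/

import Mathlib

open Set Filter Topology Metric

theorem approx_section
    {E F : Type*} [NormedAddCommGroup E] [NormedSpace ℝ E] [CompleteSpace E]
    [NormedAddCommGroup F] [NormedSpace ℝ F] [CompleteSpace F]
    (T : E →L[ℝ] F) (hT : Function.Surjective T) :
    ∃ (C : ℝ) (f : F → E), 0 ≤ C ∧ Continuous f ∧
      (∀ c : ℝ, 0 ≤ c → ∀ y, f (c • y) = c • f y) ∧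
      (∀ y, ‖f y‖ ≤ C * ‖y‖) ∧ (∀ y, ‖T (f y) - y‖ ≤ (1/2) * ‖y‖) := by
  obtain ⟨g, hg⟩ := T.exists_nonlinearRightInverse_of_surjective
    (LinearMap.range_eq_top.mpr hT)
  set C : ℝ := (g.nnnorm : ℝ) with hC
  have hC0 : 0 ≤ C := (g.nnnorm : NNReal).2
  -- partition of unity on the unit sphere of F
  set S : Set F := Metric.sphere (0:F) 1 with hS
  set U : S → Set F := fun i => Metric.ball (i:F) (1/2) with hU
  obtain ⟨ρ, hρ⟩ : ∃ ρ : PartitionOfUnity S F S, ρ.IsSubordinate U := by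
    refine PartitionOfUnity.exists_isSubordinate Metric.isClosed_sphere U
      (fun i => Metric.isOpen_ball) (fun z hz => ?_)
    exact mem_iUnion.2 ⟨⟨z, hz⟩, by simp [hU]⟩
  set h : F → E := fun z => ∑ᶠ i, ρ i z • g (i : F) with hh
  have hcont : Continuous h :=
    ρ.continuous_finsum_smul fun i x _ => continuousAt_const
  have hfin : ∀ z, h z = ∑ i ∈ ρ.finsupport z, ρ i z • g (i : F) := fun z =>
    (ρ.sum_finsupport_smul_eq_finsum (fun i _ => g (i : F))).symm
  have hsum_eq : ∀ z, ∑ i ∈ ρ.finsupport z, ρ i z = ∑ᶠ i, ρ i z := fun z =>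
    (finsum_eq_sum_of_support_subset _ (ρ.coe_finsupport z).superset).symm
  have hbound : ∀ z, ‖h z‖ ≤ C := by
    intro z
    rw [hfin]
    calc ‖∑ i ∈ ρ.finsupport z, ρ i z • g (i : F)‖
        ≤ ∑ i ∈ ρ.finsupport z, ‖ρ i z • g (i : F)‖ := norm_sum_le _ _
      _ ≤ ∑ i ∈ ρ.finsupport z, ρ i z * C := by
          refine Finset.sum_le_sum fun i _ => ?_
          rw [norm_smul, Real.norm_of_nonneg (ρ.nonneg i z)]
          have hb : ‖g (i:F)‖ ≤ C * ‖(i:F)‖ := g.bound _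
          have hi : ‖(i:F)‖ = 1 := mem_sphere_zero_iff_norm.mp i.2
          rw [hi, mul_one] at hb
          exact mul_le_mul_of_nonneg_left hb (ρ.nonneg i z)
      _ = (∑ i ∈ ρ.finsupport z, ρ i z) * C := by rw [Finset.sum_mul]
      _ ≤ 1 * C := by
          refine mul_le_mul_of_nonneg_right ?_ hC0
          rw [hsum_eq]; exact ρ.sum_le_one z
      _ = C := one_mul C
  have hest : ∀ z ∈ S, ‖T (h z) - z‖ ≤ 1/2 := by
    intro z hz
    have hone : ∑ i ∈ ρ.finsupport z, ρ i z = 1 := ρ.sum_finsupport hz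
    have hTh : T (h z) = ∑ i ∈ ρ.finsupport z, ρ i z • (i : F) := by
      rw [hfin, map_sum]
      refine Finset.sum_congr rfl fun i _ => ?_
      rw [T.map_smul, g.right_inv]
    have hzz : (z : F) = ∑ i ∈ ρ.finsupport z, ρ i z • z := by
      rw [← Finset.sum_smul, hone, one_smul]
    rw [hTh]
    calc ‖∑ i ∈ ρ.finsupport z, ρ i z • (i : F) - z‖
        = ‖∑ i ∈ ρ.finsupport z, ρ i z • ((i : F) - z)‖ := by
          have veq : ∑ i ∈ ρ.finsupport z, ρ i z • ((i : F) - z)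
              = (∑ i ∈ ρ.finsupport z, ρ i z • (i : F)) - z := by
            simp_rw [smul_sub]
            rw [Finset.sum_sub_distrib, ← Finset.sum_smul, hone, one_smul]
          rw [← veq]
      _ ≤ ∑ i ∈ ρ.finsupport z, ρ i z * ‖(i : F) - z‖ := by
          refine (norm_sum_le _ _).trans (Finset.sum_le_sum fun i _ => ?_)
          rw [norm_smul, Real.norm_of_nonneg (ρ.nonneg i z)]
      _ ≤ ∑ i ∈ ρ.finsupport z, ρ i z * (1/2) := by
          refine Finset.sum_le_sum fun i hi => ?_
          have hzsupp : z ∈ Function.support (ρ i) := (ρ.mem_finsupport z).mp hi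
          have : z ∈ U i := hρ i (subset_tsupport _ hzsupp)
          have : ‖z - (i : F)‖ < 1/2 := by
            simpa [hU, Metric.mem_ball, dist_eq_norm] using this
          rw [norm_sub_rev] at this
          exact mul_le_mul_of_nonneg_left this.le (ρ.nonneg i z)
      _ = (∑ i ∈ ρ.finsupport z, ρ i z) * (1/2) := by rw [Finset.sum_mul]
      _ = 1/2 := by rw [hone, one_mul]
  -- now extend positively homogeneously
  refine ⟨C, fun y => ‖y‖ • h (‖y‖⁻¹ • y), hC0, ?_, ?_, ?_, ?_⟩
  · -- continuity
    rw [continuous_iff_continuousAt]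
    intro y
    rcases eq_or_ne y 0 with rfl | hy
    · have h0 : ‖(0:F)‖ • h (‖(0:F)‖⁻¹ • (0:F)) = 0 := by simp
      rw [ContinuousAt, h0]
      refine squeeze_zero_norm (a := fun y : F => ‖y‖ * C) (fun y => ?_) ?_
      · calc ‖‖y‖ • h (‖y‖⁻¹ • y)‖ = ‖y‖ * ‖h (‖y‖⁻¹ • y)‖ := by
              rw [norm_smul, Real.norm_of_nonneg (norm_nonneg _)]
          _ ≤ ‖y‖ * C := mul_le_mul_of_nonneg_left (hbound _) (norm_nonneg _)
      · have : Filter.Tendsto (fun y : F => ‖y‖ * C) (nhds 0) (nhds (‖(0:F)‖ * C)) :=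
          (continuous_norm.mul continuous_const).continuousAt
        simpa using this
    · have hny : ‖y‖ ≠ 0 := norm_ne_zero_iff.mpr hy
      exact (continuous_norm.continuousAt).smul
        ((hcont.continuousAt).comp
          (((continuous_norm.continuousAt (x := y)).inv₀ hny).smul continuousAt_id))
  · -- homogeneity
    intro c hc y
    rcases eq_or_lt_of_le hc with rfl | hc
    · simp
    rcases eq_or_ne y 0 with rfl | hy
    · simp
    have hnc : ‖c • y‖ = c * ‖y‖ := by
      rw [norm_smul, Real.norm_of_nonneg hc.le]
    have hproj : ‖c • y‖⁻¹ • (c • y) = ‖y‖⁻¹ • y := by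
      rw [hnc, smul_smul]
      congr 1
      rw [mul_inv, mul_comm (c⁻¹), mul_assoc, inv_mul_cancel₀ hc.ne', mul_one]
    show ‖c • y‖ • h (‖c • y‖⁻¹ • (c • y)) = c • (‖y‖ • h (‖y‖⁻¹ • y))
    rw [hproj, hnc, smul_smul]
  · -- bound
    intro y
    rw [norm_smul, Real.norm_of_nonneg (norm_nonneg _), mul_comm]
    exact mul_le_mul_of_nonneg_right (hbound _) (norm_nonneg _)
  · -- approximation
    intro y
    rcases eq_or_ne y 0 with rfl | hy
    · simp
    have hny : ‖y‖ ≠ 0 := norm_ne_zero_iff.mpr hy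
    set z : F := ‖y‖⁻¹ • y with hzdef
    have hzS : z ∈ S := by
      rw [hS, mem_sphere_zero_iff_norm, hzdef, norm_smul, Real.norm_of_nonneg
        (inv_nonneg.mpr (norm_nonneg y)), inv_mul_cancel₀ hny]
    have hyz : y = ‖y‖ • z := by
      rw [hzdef, smul_smul, mul_inv_cancel₀ hny, one_smul]
    show ‖T (‖y‖ • h z) - y‖ ≤ 1/2 * ‖y‖
    calc ‖T (‖y‖ • h z) - y‖ = ‖‖y‖ • (T (h z) - z)‖ := by
          rw [T.map_smul, smul_sub, ← hyz]
      _ = ‖y‖ * ‖T (h z) - z‖ := by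
          rw [norm_smul, Real.norm_of_nonneg (norm_nonneg _)]
      _ ≤ ‖y‖ * (1/2) := mul_le_mul_of_nonneg_left (hest z hzS) (norm_nonneg _)
      _ = (1/2) * ‖y‖ := mul_comm _ _

/-- Bartle–Graves: a continuous linear surjection of Banach spaces admits a
continuous, positively homogeneous section. -/
theorem bartle_graves
    {E F : Type*} [NormedAddCommGroup E] [NormedSpace ℝ E] [CompleteSpace E]
    [NormedAddCommGroup F] [NormedSpace ℝ F] [CompleteSpace F]
    (T : E →L[ℝ] F) (hT : Function.Surjective T) :
    ∃ s : F → E, Continuous s ∧ (∀ y, T (s y) = y) ∧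
      ∀ (c : ℝ), 0 ≤ c → ∀ y, s (c • y) = c • s y := by
  obtain ⟨C, f, hC0, hfc, hfh, hfb, hfa⟩ := approx_section T hT
  set D : F → F := fun y => y - T (f y) with hD
  have hDc : Continuous D := continuous_id.sub (T.continuous.comp hfc)
  have hDn : ∀ y, ‖D y‖ ≤ (1/2) * ‖y‖ := fun y => by
    rw [hD]; simpa [norm_sub_rev] using hfa y
  have hDh : ∀ c : ℝ, 0 ≤ c → ∀ y, D (c • y) = c • D y := fun c hc y => by
    rw [hD]; simp only [hfh c hc y, map_smul, smul_sub]
  have hvc : ∀ n, Continuous (D^[n]) := fun n => by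
    induction n with
    | zero => simpa using continuous_id
    | succ n ih => rw [Function.iterate_succ]; exact ih.comp hDc
  have hvn : ∀ n y, ‖D^[n] y‖ ≤ (1/2)^n * ‖y‖ := by
    intro n
    induction n with
    | zero => intro y; simp
    | succ n ih =>
      intro y
      rw [Function.iterate_succ_apply']
      calc ‖D (D^[n] y)‖ ≤ (1/2) * ‖D^[n] y‖ := hDn _
        _ ≤ (1/2) * ((1/2)^n * ‖y‖) := by
            refine mul_le_mul_of_nonneg_left (ih y) (by norm_num)
        _ = (1/2)^(n+1) * ‖y‖ := by ring
  have hvh : ∀ n (c : ℝ), 0 ≤ c → ∀ y, D^[n] (c • y) = c • D^[n] y := by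
    intro n
    induction n with
    | zero => intro c hc y; simp
    | succ n ih =>
      intro c hc y
      rw [Function.iterate_succ_apply', Function.iterate_succ_apply', ih c hc, hDh c hc]
  have hb : ∀ n y, ‖f (D^[n] y)‖ ≤ C * ‖y‖ * (1/2)^n := by
    intro n y
    calc ‖f (D^[n] y)‖ ≤ C * ‖D^[n] y‖ := hfb _
      _ ≤ C * ((1/2)^n * ‖y‖) := mul_le_mul_of_nonneg_left (hvn n y) hC0
      _ = C * ‖y‖ * (1/2)^n := by ring
  have hgeo : Summable (fun n : ℕ => ((1:ℝ)/2)^n) :=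
    summable_geometric_of_lt_one (by norm_num) (by norm_num)
  have hsm : ∀ y, Summable (fun n => f (D^[n] y)) := fun y =>
    Summable.of_norm_bounded (hgeo.mul_left (C * ‖y‖)) (fun n => hb n y)
  refine ⟨fun y => ∑' n, f (D^[n] y), ?_, ?_, ?_⟩
  · -- continuity
    rw [continuous_iff_continuousAt]
    intro y₀
    set R : ℝ := ‖y₀‖ + 1 with hR
    have hmem : y₀ ∈ Metric.ball (0:F) R := by
      rw [Metric.mem_ball, dist_zero_right]; linarith
    have hunif : TendstoUniformlyOn
        (fun N x => ∑ n ∈ Finset.range N, f (D^[n] x))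
        (fun x => ∑' n, f (D^[n] x)) Filter.atTop (Metric.ball (0:F) R) := by
      refine tendstoUniformlyOn_tsum_nat (hgeo.mul_left (C * R)) ?_
      intro n x hx
      rw [Metric.mem_ball, dist_zero_right] at hx
      calc ‖f (D^[n] x)‖ ≤ C * ‖x‖ * (1/2)^n := hb n x
        _ ≤ C * R * (1/2)^n := by
            have := mul_le_mul_of_nonneg_left hx.le hC0
            exact mul_le_mul_of_nonneg_right this (by positivity)
    have hcO : ContinuousOn (fun x => ∑' n, f (D^[n] x)) (Metric.ball (0:F) R) := by
      refine hunif.continuousOn (Filter.Eventually.of_forall fun N => ?_).frequently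
      exact (continuous_finset_sum _ fun n _ => hfc.comp (hvc n)).continuousOn
    exact hcO.continuousAt (Metric.isOpen_ball.mem_nhds hmem)
  · -- section
    intro y
    have hterm : ∀ n, T (f (D^[n] y)) = D^[n] y - D^[n+1] y := by
      intro n
      rw [Function.iterate_succ_apply']
      show T (f (D^[n] y)) = D^[n] y - (D^[n] y - T (f (D^[n] y)))
      abel
    have hsum2 : Summable (fun n => T (f (D^[n] y))) :=
      (hsm y).map (T.toLinearMap.toAddMonoidHom) T.continuous
    have hlim : Filter.Tendsto (fun n => D^[n] y) Filter.atTop (nhds 0) := by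
      refine squeeze_zero_norm (fun n => hvn n y) ?_
      have := (tendsto_pow_atTop_nhds_zero_of_lt_one (by norm_num : (0:ℝ) ≤ 1/2)
        (by norm_num : (1:ℝ)/2 < 1)).mul_const ‖y‖
      simpa using this
    have hpart : ∀ N, ∑ n ∈ Finset.range N, T (f (D^[n] y)) = y - D^[N] y := by
      intro N
      simp_rw [hterm]
      rw [Finset.sum_range_sub' (fun n => D^[n] y)]
      simp
    have htend : Filter.Tendsto (fun N => ∑ n ∈ Finset.range N, T (f (D^[n] y)))
        Filter.atTop (nhds y) := by
      simp_rw [hpart]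
      simpa using Filter.Tendsto.sub (tendsto_const_nhds (x := y)) hlim
    have h1 : T (∑' n, f (D^[n] y)) = ∑' n, T (f (D^[n] y)) := by
      exact ((hsm y).hasSum.mapL T).tsum_eq.symm
    rw [h1]
    exact tendsto_nhds_unique hsum2.hasSum.tendsto_sum_nat htend
  · -- homogeneity
    intro c hc y
    have : (fun n => f (D^[n] (c • y))) = fun n => c • f (D^[n] y) :=
      funext fun n => by rw [hvh n c hc y, hfh c hc]
    show (∑' n, f (D^[n] (c • y))) = c • ∑' n, f (D^[n] y)
    rw [this]
    exact ((hsm y).hasSum.const_smul c).tsum_eq
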